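/- Let $0 < \mu < e^{-1}$ and $F'(x) = \frac{1}{2\sqrt{x}(\log x)^3} - \frac{1}{\sqrt{x}(\log x)^4}$ on $(0,\mu]$. Then with $\psi(x) = x|\log x|$ for $x > 0$, one has $\int_0^\mu \psi(|F'(x)|^2)\,dx < +\infty$. -/

import Mathlib

open MeasureTheory Real Set

open Filter in
private lemma stmt13_aux (x : ℝ) (hx0 : 0 < x) (hxl : Real.log x < -1) :
    (1 / (2 * Real.sqrt x * Real.log x ^ 3) - 1 / (Real.sqrt x * Real.log x ^ 4) ≠ 0) ∧
    |1 / (2 * Real.sqrt x * Real.log x ^ 3) - 1 / (Real.sqrt x * Real.log x ^ 4)| ^ 2 *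
      |Real.log (|1 / (2 * Real.sqrt x * Real.log x ^ 3) -
        1 / (Real.sqrt x * Real.log x ^ 4)| ^ 2)|
      ≤ 100 * (-1 / (x * Real.log x ^ 5)) := by
  obtain ⟨ℓ, hℓdef⟩ : ∃ ℓ : ℝ, ℓ = -Real.log x := ⟨_, rfl⟩
  have hℓ : 1 < ℓ := by rw [hℓdef]; linarith
  have hℓ0 : (0:ℝ) < ℓ := zero_lt_one.trans hℓ
  obtain ⟨s, hsdef⟩ : ∃ s : ℝ, s = Real.sqrt x := ⟨_, rfl⟩
  have hs : 0 < s := hsdef ▸ Real.sqrt_pos.2 hx0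
  have hs2 : s ^ 2 = x := by rw [hsdef]; exact Real.sq_sqrt hx0.le
  have hlog_eq : Real.log x = -ℓ := by rw [hℓdef]; ring
  rw [← hsdef, hlog_eq]
  have hE : 1 / (2 * s * (-ℓ) ^ 3) - 1 / (s * (-ℓ) ^ 4)
      = -(1 / (2 * s * ℓ ^ 3) + 1 / (s * ℓ ^ 4)) := by
    rw [show 2 * s * (-ℓ) ^ 3 = -(2 * s * ℓ ^ 3) by ring,
      show s * (-ℓ) ^ 4 = s * ℓ ^ 4 by ring, div_neg]
    ring
  have hA : (0:ℝ) < 1 / (2 * s * ℓ ^ 3) := by positivity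
  have hB : (0:ℝ) < 1 / (s * ℓ ^ 4) := by positivity
  set M : ℝ := 1 / (2 * s * ℓ ^ 3) + 1 / (s * ℓ ^ 4) with hMdef
  have hMpos : 0 < M := by positivity
  have habs : |1 / (2 * s * (-ℓ) ^ 3) - 1 / (s * (-ℓ) ^ 4)| = M := by
    rw [hE, abs_neg, abs_of_pos hMpos]
  refine ⟨by rw [hE]; exact neg_ne_zero.2 hMpos.ne', ?_⟩
  rw [habs]
  have hrhs : -1 / (x * (-ℓ) ^ 5) = 100 * (100⁻¹ * (1 / (x * ℓ ^ 5))) := by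
    rw [show x * (-ℓ) ^ 5 = -(x * ℓ ^ 5) by ring, div_neg, neg_div, neg_neg]
    ring
  -- M ≤ 3 * A
  have hMle : M ≤ 3 * (1 / (2 * s * ℓ ^ 3)) := by
    have hp : ℓ ^ 3 ≤ ℓ ^ 4 := pow_le_pow_right₀ hℓ.le (by norm_num)
    have h1 : 1 / (s * ℓ ^ 4) ≤ 1 / (s * ℓ ^ 3) :=
      one_div_le_one_div_of_le (by positivity) (mul_le_mul_of_nonneg_left hp hs.le)
    have h2 : 1 / (s * ℓ ^ 3) = 2 * (1 / (2 * s * ℓ ^ 3)) := by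
      field_simp
    rw [hMdef]
    linarith
  -- M ^ 2 ≤ 9 / (4 x ℓ^6)
  have hAsq : (1 / (2 * s * ℓ ^ 3)) ^ 2 = 1 / (4 * x * ℓ ^ 6) := by
    rw [← hs2]; field_simp; ring
  have hMsq : M ^ 2 ≤ 9 * (1 / (4 * x * ℓ ^ 6)) :=
    calc M ^ 2 ≤ (3 * (1 / (2 * s * ℓ ^ 3))) ^ 2 := pow_le_pow_left₀ hMpos.le hMle 2
      _ = 9 * (1 / (2 * s * ℓ ^ 3)) ^ 2 := by ring
      _ = 9 * (1 / (4 * x * ℓ ^ 6)) := by rw [hAsq]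
  -- bound on |log A|
  have hlogs : Real.log s = -(ℓ / 2) := by
    rw [hsdef, Real.log_sqrt hx0.le, hlog_eq]; ring
  have hlogA : Real.log (1 / (2 * s * ℓ ^ 3))
      = -(Real.log 2 + Real.log s + 3 * Real.log ℓ) := by
    rw [one_div, Real.log_inv, Real.log_mul (by positivity) (by positivity),
      Real.log_mul two_ne_zero hs.ne', Real.log_pow]
    push_cast; ring
  have hlogℓ1 : 0 ≤ Real.log ℓ := Real.log_nonneg hℓ.le
  have hlogℓ2 : Real.log ℓ ≤ ℓ := by
    have := Real.log_le_sub_one_of_pos hℓ0; linarith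
  have hlog2a : (0:ℝ) ≤ Real.log 2 := Real.log_nonneg one_le_two
  have hlog2b : Real.log 2 ≤ 1 := by
    have := Real.log_le_sub_one_of_pos (by norm_num : (0:ℝ) < 2); linarith
  have hlog3a : (0:ℝ) ≤ Real.log 3 := Real.log_nonneg (by norm_num)
  have hlog3b : Real.log 3 ≤ 2 := by
    have := Real.log_le_sub_one_of_pos (by norm_num : (0:ℝ) < 3); linarith
  have habsA : |Real.log (1 / (2 * s * ℓ ^ 3))| ≤ 5 * ℓ := by
    rw [hlogA, hlogs, abs_le]
    constructor <;> linarith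
  -- bound on |log (M^2)|
  have h1 : Real.log (1 / (2 * s * ℓ ^ 3)) ≤ Real.log M :=
    Real.log_le_log hA (by rw [hMdef]; linarith)
  have h2 : Real.log M ≤ Real.log 3 + Real.log (1 / (2 * s * ℓ ^ 3)) := by
    have := Real.log_le_log hMpos hMle
    rwa [Real.log_mul (by norm_num) hA.ne'] at this
  have habsA' := abs_le.mp habsA
  have hlogM2 : |Real.log (M ^ 2)| ≤ 14 * ℓ := by
    rw [Real.log_pow, abs_le]
    push_cast
    constructor <;> linarith [habsA'.1, habsA'.2]
  -- conclude
  have hx5 : (0:ℝ) < 1 / (x * ℓ ^ 5) := by positivity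
  have key : M ^ 2 * |Real.log (M ^ 2)| ≤ 9 * (1 / (4 * x * ℓ ^ 6)) * (14 * ℓ) :=
    mul_le_mul hMsq hlogM2 (abs_nonneg _) (by positivity)
  have heq : 9 * (1 / (4 * x * ℓ ^ 6)) * (14 * ℓ) = (63 / 2) * (1 / (x * ℓ ^ 5)) := by
    field_simp; ring
  rw [hrhs]
  rw [heq] at key
  nlinarith [hx5, key]

open Filter in
/-- with `0 < μ < e⁻¹`, `F' x = 1/(2√x (log x)³) - 1/(√x (log x)⁴)` on
`(0, μ]`, and `ψ x = x |log x|` for `x > 0`, one has `∫_0^μ ψ(|F' x|²) dx < ∞`. -/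
theorem stmt13 (μ : ℝ) (hμ0 : 0 < μ) (hμ1 : μ < Real.exp (-1)) (F' ψ : ℝ → ℝ)
    (hF' : ∀ x ∈ Ioc (0 : ℝ) μ,
      F' x = 1 / (2 * Real.sqrt x * Real.log x ^ 3) - 1 / (Real.sqrt x * Real.log x ^ 4))
    (hψ : ∀ x > (0 : ℝ), ψ x = x * |Real.log x|) :
    IntegrableOn (fun x => ψ (|F' x| ^ 2)) (Ioo 0 μ) volume := by
  have hlogx : ∀ x ∈ Ioo (0:ℝ) μ, Real.log x < -1 := by
    intro x hx
    have := Real.log_lt_log hx.1 (hx.2.trans hμ1)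
    rwa [Real.log_exp] at this
  set g : ℝ → ℝ := fun x => -1 / (x * Real.log x ^ 5) with hgdef
  set G : ℝ → ℝ := fun x => ((Real.log x) ^ 4)⁻¹ / 4 with hGdef
  have hGcont : ContinuousOn G (Icc 0 μ) := by
    intro x hx
    rcases eq_or_lt_of_le hx.1 with h0 | h0
    · -- continuity at 0
      subst h0
      have h1 : Tendsto (fun y : ℝ => (Real.log y ^ 4)⁻¹ / 4) (nhdsWithin 0 (Ioi 0))
          (nhds 0) := by
        have h3 : Tendsto (fun y : ℝ => |Real.log y|) (nhdsWithin 0 (Ioi 0)) atTop :=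
          tendsto_abs_atBot_atTop.comp Real.tendsto_log_nhdsGT_zero
        have h4 : Tendsto (fun y : ℝ => |Real.log y| ^ 4) (nhdsWithin 0 (Ioi 0)) atTop :=
          (tendsto_pow_atTop (by norm_num : (4:ℕ) ≠ 0)).comp h3
        have h2 : Tendsto (fun y : ℝ => Real.log y ^ 4) (nhdsWithin 0 (Ioi 0)) atTop := by
          refine h4.congr fun y => ?_
          rw [← abs_pow, abs_of_nonneg (by positivity)]
        have := (tendsto_inv_atTop_zero.comp h2).div_const (4:ℝ)
        simpa using this
      have hsub : Icc (0:ℝ) μ ⊆ {0} ∪ Ioi 0 := by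
        intro y hy
        rcases eq_or_lt_of_le hy.1 with h | h
        · exact Or.inl (by simp [← h])
        · exact Or.inr h
      refine ContinuousWithinAt.mono ?_ hsub
      unfold ContinuousWithinAt
      rw [nhdsWithin_union, nhdsWithin_singleton]
      have hG0 : G 0 = 0 := by simp [hGdef]
      rw [hG0]
      refine tendsto_sup.mpr ⟨?_, h1⟩
      simpa [hG0] using tendsto_pure_nhds G 0
    · -- continuity at positive x
      have hx1 : x < 1 := lt_of_le_of_lt hx.2 (hμ1.trans (by
        rw [Real.exp_lt_one_iff]; norm_num))
      have hne : Real.log x ≠ 0 := (Real.log_neg h0 hx1).ne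
      exact (((((Real.continuousAt_log h0.ne').pow 4).inv₀
        (pow_ne_zero _ hne)).div_const 4).continuousWithinAt)
  have hGderiv : ∀ x ∈ Ioo (0:ℝ) μ, HasDerivAt G (g x) x := by
    intro x hx
    have hne : Real.log x ≠ 0 := by
      have := hlogx x hx; linarith
    have h1 : HasDerivAt Real.log x⁻¹ x := Real.hasDerivAt_log hx.1.ne'
    have h2 : HasDerivAt (fun y => Real.log y ^ 4)
        ((4 : ℕ) * Real.log x ^ 3 * x⁻¹) x := by
      simpa using h1.fun_pow 4
    have h3 := (h2.inv (pow_ne_zero 4 hne)).div_const 4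
    have hx0 : x ≠ 0 := hx.1.ne'
    have e : -(((4:ℕ):ℝ) * Real.log x ^ 3 * x⁻¹) / (Real.log x ^ 4) ^ 2 / 4
        = -1 / (x * Real.log x ^ 5) := by
      rw [inv_eq_one_div]
      field_simp
      ring
    rw [hgdef]
    show HasDerivAt G (-1 / (x * Real.log x ^ 5)) x
    rw [← e]
    exact h3
  have hgpos : ∀ x ∈ Ioo (0:ℝ) μ, 0 ≤ g x := by
    intro x hx
    have hl := hlogx x hx
    have h5 : Real.log x ^ 5 < 0 := Odd.pow_neg (⟨2, by norm_num⟩) (by linarith)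
    have : x * Real.log x ^ 5 < 0 := mul_neg_of_pos_of_neg hx.1 h5
    exact (div_pos_of_neg_of_neg (by norm_num) this).le
  have hgint : IntegrableOn g (Ioo 0 μ) volume :=
    (intervalIntegral.integrableOn_deriv_of_nonneg hGcont hGderiv hgpos).mono_set
      Ioo_subset_Ioc_self
  have hkey : ∀ x ∈ Ioo (0:ℝ) μ,
      ψ (|F' x| ^ 2) = |F' x| ^ 2 * |Real.log (|F' x| ^ 2)| ∧
      ψ (|F' x| ^ 2) ≤ 100 * g x := by
    intro x hx
    obtain ⟨hne, hbound⟩ := stmt13_aux x hx.1 (hlogx x hx)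
    rw [← hF' x ⟨hx.1, hx.2.le⟩] at hne hbound
    have hpos : 0 < |F' x| ^ 2 := by positivity
    have heq := hψ _ hpos
    exact ⟨heq, by rw [heq]; simpa [hgdef] using hbound⟩
  apply Integrable.mono' (hgint.const_mul 100)
  · -- measurability
    have hm : Measurable fun x : ℝ =>
        |1 / (2 * Real.sqrt x * Real.log x ^ 3) - 1 / (Real.sqrt x * Real.log x ^ 4)| ^ 2 *
        |Real.log (|1 / (2 * Real.sqrt x * Real.log x ^ 3) -
          1 / (Real.sqrt x * Real.log x ^ 4)| ^ 2)| := by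
      have m0 : Measurable fun x : ℝ =>
          1 / (2 * Real.sqrt x * Real.log x ^ 3) - 1 / (Real.sqrt x * Real.log x ^ 4) := by
        refine Measurable.sub (measurable_const.div ?_) (measurable_const.div ?_)
        · exact (Real.continuous_sqrt.measurable.const_mul 2).mul
            (Real.measurable_log.pow_const 3)
        · exact Real.continuous_sqrt.measurable.mul (Real.measurable_log.pow_const 4)
      have m1 : Measurable fun x : ℝ =>
          |1 / (2 * Real.sqrt x * Real.log x ^ 3) - 1 / (Real.sqrt x * Real.log x ^ 4)| ^ 2 :=
        (m0.abs).pow_const 2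
      exact m1.mul ((Real.measurable_log.comp m1).abs)
    apply hm.aestronglyMeasurable.congr
    rw [Filter.EventuallyEq, ae_restrict_iff' measurableSet_Ioo]
    filter_upwards with x hx
    rw [(hkey x hx).1, hF' x ⟨hx.1, hx.2.le⟩]
  · rw [ae_restrict_iff' measurableSet_Ioo]
    filter_upwards with x hx
    have h := (hkey x hx).2
    have h0 : 0 ≤ ψ (|F' x| ^ 2) := by
      rw [(hkey x hx).1]; positivity
    rw [Real.norm_eq_abs, abs_of_nonneg h0]
    exact h
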